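/- arXiv:2006.15249 — 4 statements merged into one kernel-verified Lean document; each statement's English description precedes it below -/
import Mathlib

section
/- Let p and r be primes and let f, m ≥ 1 be integers such that p^f + 1 = r^m. Then one of the following holds: (a) p = 2, f = 3, r = 3, m = 2; (b) p = 2, m = 1, and f is a power of 2 (so r = 2^f + 1 is a Fermat prime); (c) r = 2, f = 1, and m is prime (so p = 2^m − 1 is a Mersenne prime). -/
open Finset in
private lemma aux_odd_geom_sum_iff (x : ℤ) (hx : Odd x) (n : ℕ) :
    Odd (∑ i ∈ Finset.range n, x ^ i) ↔ Odd n := by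
  induction n with
  | zero => simp
  | succ k ih =>
    rw [Finset.sum_range_succ, Int.odd_add]
    have hxk : Odd (x ^ k) := hx.pow
    simp only [Int.not_even_iff_odd.mpr hxk, ih, Nat.odd_add_one, ← Nat.not_odd_iff_even]
    tauto

private lemma aux_odd_dvd_two_pow {d n : ℕ} (hd : Odd d) (h : d ∣ 2 ^ n) : d = 1 := by
  rcases (Nat.dvd_prime_pow Nat.prime_two).mp h with ⟨a, _, rfl⟩
  cases a with
  | zero => rfl
  | succ b =>
    exfalso
    have : 2 ^ (b + 1) % 2 = 0 := by simp [pow_succ, Nat.mul_mod]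
    have := Nat.odd_iff.mp hd
    omega

/-- If `p, r` are primes and `f, m ≥ 1` with `p ^ f + 1 = r ^ m`, then either
`(p, f, r, m) = (2, 3, 3, 2)`, or `p = 2`, `m = 1` and `f` is a power of `2`
(so that `r = 2 ^ f + 1` is a Fermat prime), or `r = 2`, `f = 1` and `m` is prime
(so that `p = 2 ^ m - 1` is a Mersenne prime). -/
theorem stmt_0 (p r f m : ℕ) (hp : p.Prime) (hr : r.Prime) (hf : 1 ≤ f) (hm : 1 ≤ m)
    (h : p ^ f + 1 = r ^ m) :
    (p = 2 ∧ f = 3 ∧ r = 3 ∧ m = 2) ∨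
    (p = 2 ∧ m = 1 ∧ ∃ k : ℕ, f = 2 ^ k) ∨
    (r = 2 ∧ f = 1 ∧ m.Prime) := by
  have hp2 := hp.two_le
  have hr2 := hr.two_le
  rcases hp.eq_two_or_odd' with hpe | hpo
  · -- p = 2
    subst hpe
    have hro : Odd r := by
      rcases hr.eq_two_or_odd' with hre | hro
      · exfalso
        subst hre
        have h1 : (2:ℕ) ∣ 2 ^ m := dvd_pow_self 2 (by omega)
        have h2 : (2:ℕ) ∣ 2 ^ f := dvd_pow_self 2 (by omega)
        omega
      · exact hro
    rcases Nat.even_or_odd m with hme | hmo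
    · -- m even : the case (2,3,3,2)
      left
      obtain ⟨s, hs⟩ := hme
      have hs1 : 1 ≤ s := by omega
      set t := r ^ s with ht
      have htr : r ≤ t := Nat.le_self_pow (by omega) r
      have ht3 : 3 ≤ t := by
        have : r ≠ 2 := by rintro rfl; exact (Nat.not_odd_iff_even.mpr even_two) hro
        omega
      have htsq : t * t = 2 ^ f + 1 := by
        rw [ht, ← pow_add, ← hs, ← h]
      obtain ⟨u, hu⟩ : ∃ u, t = u + 1 := ⟨t - 1, by omega⟩
      have hfac : u * (u + 2) = 2 ^ f := by nlinarith [htsq, hu]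
      have hu2 : 2 ≤ u := by omega
      obtain ⟨a, _, ha⟩ := (Nat.dvd_prime_pow Nat.prime_two).mp
        (⟨u + 2, hfac.symm⟩ : u ∣ 2 ^ f)
      obtain ⟨b, _, hb⟩ := (Nat.dvd_prime_pow Nat.prime_two).mp
        (⟨u, by rw [← hfac]; ring⟩ : (u + 2) ∣ 2 ^ f)
      -- 2^a + 2 = 2^b with 2^a ≥ 2 forces a = 1
      have ha1 : a = 1 := by
        rcases Nat.lt_or_ge a 2 with h' | h'
        · interval_cases a
          · norm_num at ha; omega
          · rfl
        · exfalso
          have hb2 : 2 ≤ b := by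
            by_contra h''
            interval_cases b <;> omega
          have d1 : (4:ℕ) ∣ 2 ^ a := by
            have : (2:ℕ) ^ 2 ∣ 2 ^ a := pow_dvd_pow 2 h'
            simpa using this
          have d2 : (4:ℕ) ∣ 2 ^ b := by
            have : (2:ℕ) ^ 2 ∣ 2 ^ b := pow_dvd_pow 2 hb2
            simpa using this
          omega
      have hu2' : u = 2 := by rw [ha1] at ha; omega
      have ht3' : t = 3 := by omega
      have hr3 : r = 3 := by
        have hd : r ∣ t := dvd_pow_self r (by omega)
        rw [ht3'] at hd
        exact (Nat.prime_dvd_prime_iff_eq hr (by norm_num)).mp hd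
      have hs1' : s = 1 := by
        have key : r ^ s = r ^ 1 := by rw [pow_one, ← ht, ht3', hr3]
        exact Nat.pow_right_injective hr2 key
      have hm2 : m = 2 := by omega
      have hf3 : f = 3 := by
        have key : (2:ℕ) ^ f = 2 ^ 3 := by
          rw [hm2, hr3] at h; norm_num at h ⊢; omega
        exact Nat.pow_right_injective le_rfl key
      exact ⟨rfl, hf3, hr3, hm2⟩
    · -- m odd : show m = 1
      have hcast : ((r:ℤ)) ^ m = 2 ^ f + 1 := by exact_mod_cast h.symm
      have hm1 : m = 1 := by
        have hZ : (∑ i ∈ Finset.range m, (r:ℤ) ^ i) * ((r:ℤ) - 1) = 2 ^ f := by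
          rw [geom_sum_mul, hcast]; ring
        have hSodd : Odd (∑ i ∈ Finset.range m, (r:ℤ) ^ i) :=
          (aux_odd_geom_sum_iff _ (by exact_mod_cast hro.natCast) m).mpr hmo
        have hdvd : (∑ i ∈ Finset.range m, (r:ℤ) ^ i).natAbs ∣ 2 ^ f := by
          have hd : (∑ i ∈ Finset.range m, (r:ℤ) ^ i) ∣ (2:ℤ) ^ f := ⟨_, hZ.symm⟩
          have h2 := Int.natAbs_dvd_natAbs.mpr hd
          rw [Int.natAbs_pow] at h2
          exact_mod_cast h2
        have hone : (∑ i ∈ Finset.range m, (r:ℤ) ^ i).natAbs = 1 :=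
          aux_odd_dvd_two_pow (Int.natAbs_odd.mpr hSodd) hdvd
        rcases Int.natAbs_eq_iff.mp hone with hS1 | hSm1
        · rw [hS1] at hZ
          push_cast at hZ
          have hrval : (r:ℤ) = 2 ^ f + 1 := by linarith
          have : ((r:ℤ)) ^ m = (r:ℤ) ^ 1 := by rw [pow_one, hcast, hrval]
          have : r ^ m = r ^ 1 := by exact_mod_cast this
          exact Nat.pow_right_injective hr2 this
        · exfalso
          rw [hSm1] at hZ
          push_cast at hZ
          have h1 : (0:ℤ) < 2 ^ f := by positivity
          have h2 : (2:ℤ) ≤ (r:ℤ) := by exact_mod_cast hr2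
          linarith
      right; left
      refine ⟨rfl, hm1, ?_⟩
      have hP : (2 ^ f + 1).Prime := by
        rw [h, hm1, pow_one]; exact hr
      exact Nat.pow_of_pow_add_prime one_lt_two (by omega) hP
  · -- p odd, so r = 2
    have hre : r = 2 := by
      rcases hr.eq_two_or_odd' with hre | hro
      · exact hre
      · exfalso
        have h1 : Odd (p ^ f) := hpo.pow
        have h2 : Odd (r ^ m) := hro.pow
        rw [Nat.odd_iff] at h1 h2
        omega
    subst hre
    rcases Nat.even_or_odd f with hfe | hfo
    · -- f even: contradiction mod 4
      exfalso
      obtain ⟨t, htf⟩ := hfe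
      have ht1 : 1 ≤ t := by omega
      have hpto : Odd (p ^ t) := hpo.pow
      obtain ⟨k, hk⟩ := hpto
      have hK : p ^ f + 1 = 4 * (k * k + k) + 2 := by
        have hff : p ^ f = (p ^ t) * (p ^ t) := by rw [← pow_add, htf]
        rw [hff, hk]; ring
      have hm2 : 2 ≤ m := by
        by_contra h'
        have hm1 : m = 1 := by omega
        rw [hm1, pow_one] at h
        have : 2 ≤ p ^ f := by
          calc 2 ≤ p := hp2
          _ ≤ p ^ f := Nat.le_self_pow (by omega) p
        omega
      have d4 : (4:ℕ) ∣ 2 ^ m := by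
        have : (2:ℕ) ^ 2 ∣ 2 ^ m := pow_dvd_pow 2 hm2
        simpa using this
      omega
    · -- f odd
      have hcast : ((p:ℤ)) ^ f + 1 = 2 ^ m := by exact_mod_cast h
      have hf1 : f = 1 := by
        by_contra hfne
        have hZ : (∑ i ∈ Finset.range f, (-(p:ℤ)) ^ i) * ((p:ℤ) + 1) = 2 ^ m := by
          have hgs := geom_sum_mul (-(p:ℤ)) f
          have hneg : (-(p:ℤ)) ^ f = -((p:ℤ) ^ f) := hfo.neg_pow _
          rw [hneg] at hgs
          linear_combination (-1 : ℤ) * hgs + hcast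
        have hQodd : Odd (∑ i ∈ Finset.range f, (-(p:ℤ)) ^ i) :=
          (aux_odd_geom_sum_iff _ (by
            have hop : Odd ((p:ℤ)) := by exact_mod_cast hpo.natCast
            exact hop.neg) f).mpr hfo
        have hdvd : (∑ i ∈ Finset.range f, (-(p:ℤ)) ^ i).natAbs ∣ 2 ^ m := by
          have hd : (∑ i ∈ Finset.range f, (-(p:ℤ)) ^ i) ∣ (2:ℤ) ^ m := ⟨_, hZ.symm⟩
          have h2 := Int.natAbs_dvd_natAbs.mpr hd
          rw [Int.natAbs_pow] at h2
          exact_mod_cast h2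
        have hone := aux_odd_dvd_two_pow (Int.natAbs_odd.mpr hQodd) hdvd
        rcases Int.natAbs_eq_iff.mp hone with hQ1 | hQm1
        · rw [hQ1] at hZ
          push_cast at hZ
          have hpf : ((p:ℤ)) ^ f = (p:ℤ) := by linarith
          have : p ^ f = p ^ 1 := by
            rw [pow_one]; exact_mod_cast hpf
          exact hfne (Nat.pow_right_injective hp2 this)
        · rw [hQm1] at hZ
          push_cast at hZ
          have h1 : (0:ℤ) < 2 ^ m := by positivity
          have h2 : (2:ℤ) ≤ (p:ℤ) := by exact_mod_cast hp2
          linarith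
      right; right
      refine ⟨rfl, hf1, ?_⟩
      rw [hf1, pow_one] at h
      have hm1 : m ≠ 1 := by
        rintro rfl
        rw [pow_one] at h
        omega
      have hP : (2 ^ m - 1).Prime := by
        have : 2 ^ m - 1 = p := by omega
        rw [this]; exact hp
      exact (Nat.prime_of_pow_sub_one_prime hm1 hP).2
end

section
/- Let f ≥ 1 be an integer and q = 2^f. Suppose ε ∈ {1, −1} is such that q + ε is a prime power with exactly one prime divisor (i.e., |π(q+ε)| = 1) and q − ε has exactly 2 or 3 distinct prime divisors. Then one of the following holds: (a) ε = −1, f is prime, q − 1 is a Mersenne prime, and q + 1 has 2 or 3 distinct prime divisors; (b) ε = 1, f = 4, q − 1 = 3·5 and q + 1 = 17; (c) ε = 1, f = 8, q − 1 = 3·5·17 and q + 1 = 257. -/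
lemma odd_dvd_two_pow {m f : ℕ} (hm : Odd m) (h : m ∣ 2 ^ f) : m = 1 := by
  have hc : Nat.Coprime m (2 ^ f) := (hm.coprime_two_right).pow_right f
  calc m = Nat.gcd m (2 ^ f) := (Nat.gcd_eq_left h).symm
  _ = 1 := hc

lemma natAbs_sub (f : ℕ) : ((2:ℤ)^f - 1).natAbs = 2^f - 1 := by
  have h : (1:ℕ) ≤ 2 ^ f := Nat.one_le_two_pow
  have he : ((2:ℤ)^f - 1) = ((2^f - 1 : ℕ) : ℤ) := by
    rw [Nat.cast_sub h]; push_cast; ring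
  rw [he, Int.natAbs_natCast]

lemma natAbs_add (f : ℕ) : ((2:ℤ)^f + 1).natAbs = 2^f + 1 := by
  have he : ((2:ℤ)^f + 1) = ((2^f + 1 : ℕ) : ℤ) := by push_cast; ring
  rw [he, Int.natAbs_natCast]

lemma geom_sum_odd {p k : ℕ} (hp : Odd p) (hk : Odd k) :
    Odd (∑ i ∈ Finset.range k, (-(p:ℤ))^i) := by
  rw [← Int.not_even_iff_odd, even_iff_two_dvd]
  intro hdvd
  have h0 : ((∑ i ∈ Finset.range k, (-(p:ℤ))^i : ℤ) : ZMod 2) = 0 :=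
    (ZMod.intCast_zmod_eq_zero_iff_dvd _ 2).mpr (by exact_mod_cast hdvd)
  have hcast : ((p : ℕ) : ZMod 2) = 1 := by
    rw [← ZMod.natCast_mod, Nat.odd_iff.mp hp]; exact Nat.cast_one
  rw [Int.cast_sum] at h0
  simp only [Int.cast_pow, Int.cast_neg, Int.cast_natCast, hcast] at h0
  have : (-1 : ZMod 2) = 1 := by decide
  rw [this] at h0
  simp only [one_pow, Finset.sum_const, Finset.card_range, smul_eq_mul, mul_one] at h0
  have hk1 : ((k : ℕ) : ZMod 2) = 1 := by
    rw [← ZMod.natCast_mod, Nat.odd_iff.mp hk]; exact Nat.cast_one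
  rw [nsmul_eq_mul, mul_one, hk1] at h0
  exact one_ne_zero h0

lemma geom_sum_odd' {p k : ℕ} (hp : Odd p) (hk : Odd k) :
    Odd (∑ i ∈ Finset.range k, ((p:ℤ))^i) := by
  rw [← Int.not_even_iff_odd, even_iff_two_dvd]
  intro hdvd
  have h0 : ((∑ i ∈ Finset.range k, ((p:ℤ))^i : ℤ) : ZMod 2) = 0 :=
    (ZMod.intCast_zmod_eq_zero_iff_dvd _ 2).mpr (by exact_mod_cast hdvd)
  have hcast : ((p : ℕ) : ZMod 2) = 1 := by
    rw [← ZMod.natCast_mod, Nat.odd_iff.mp hp]; exact Nat.cast_one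
  rw [Int.cast_sum] at h0
  simp only [Int.cast_pow, Int.cast_natCast, hcast] at h0
  simp only [one_pow, Finset.sum_const, Finset.card_range, smul_eq_mul, mul_one] at h0
  have hk1 : ((k : ℕ) : ZMod 2) = 1 := by
    rw [← ZMod.natCast_mod, Nat.odd_iff.mp hk]; exact Nat.cast_one
  rw [nsmul_eq_mul, mul_one, hk1] at h0
  exact one_ne_zero h0

lemma k_eq_one_sub {f p k : ℕ} (hf : 2 ≤ f) (hp : p.Prime) (hk : k ≠ 0)
    (h : p ^ k = 2 ^ f - 1) : k = 1 := by
  have h2f : 4 ≤ 2 ^ f := by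
    calc (4:ℕ) = 2 ^ 2 := by norm_num
    _ ≤ 2 ^ f := Nat.pow_le_pow_right (by norm_num) hf
  have h4 : (4:ℕ) ∣ 2 ^ f := by
    have : (2:ℕ)^f = 4 * 2 ^ (f - 2) := by
      rw [show (4:ℕ) = 2^2 by norm_num, ← pow_add]
      congr 1; omega
    exact ⟨2 ^ (f-2), this⟩
  -- p odd
  have hpodd : Odd p := by
    rcases hp.eq_two_or_odd' with rfl | h'
    · exfalso
      have : (2:ℕ) ∣ 2 ^ k := dvd_pow_self 2 hk
      have h2 : (2:ℕ) ∣ 2 ^ f := dvd_pow_self 2 (by omega)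
      rw [h] at this
      omega
    · exact h'
  -- k odd
  have hmod : p ^ k % 4 = 3 := by
    rw [h]; omega
  have hkodd : Odd k := by
    rcases Nat.even_or_odd k with ⟨j, rfl⟩ | hko
    · exfalso
      have : p ^ (j + j) % 4 = (p % 4) ^ (j + j) % 4 := by
        rw [Nat.pow_mod]
      have hp4 : p % 4 = 1 ∨ p % 4 = 3 := by
        have := Nat.odd_iff.mp hpodd
        omega
      rcases hp4 with h1 | h3
      · rw [h1, one_pow] at this; omega
      · rw [h3] at this
        have : (3:ℕ) ^ (j + j) % 4 = 1 := by
          have : (3:ℕ) ^ (j + j) = 9 ^ j := by rw [← two_mul, pow_mul]; norm_num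
          rw [this, Nat.pow_mod]
          norm_num
        omega
    · exact hko
  -- geometric sum
  set c : ℤ := ∑ i ∈ Finset.range k, (-(p:ℤ))^i with hc
  have hgeom : c * (-(p:ℤ) - 1) = (-(p:ℤ))^k - 1 := geom_sum_mul _ k
  have hnegpow : (-(p:ℤ))^k = -((p:ℤ)^k) := hkodd.neg_pow _
  have hcast : (p:ℤ)^k = 2^f - 1 := by
    have h1 : (1:ℕ) ≤ 2 ^ f := by omega
    have := h
    zify [h1] at this
    exact this
  have hkey : c * ((p:ℤ) + 1) = 2^f := by
    rw [hnegpow] at hgeom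
    linear_combination -hgeom + hcast
  have hdvd : c ∣ (2:ℤ)^f := ⟨(p:ℤ)+1, hkey.symm⟩
  have hcodd : Odd c := geom_sum_odd hpodd hkodd
  have hna : c.natAbs = 1 := by
    apply odd_dvd_two_pow (f := f) (Int.natAbs_odd.mpr hcodd)
    have := Int.natAbs_dvd_natAbs.mpr hdvd
    have he : ((2:ℤ) ^ f).natAbs = 2 ^ f := by
      rw [Int.natAbs_pow]; rfl
    rw [he] at this
    exact this
  have hp2 : 2 ≤ (p:ℤ) := by exact_mod_cast hp.two_le
  have hcpos : 0 < c := by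
    rcases Int.natAbs_eq c with he | he
    · rw [hna] at he; omega
    · exfalso; rw [hna] at he
      rw [he] at hkey
      have : (0:ℤ) < 2^f := by positivity
      nlinarith
  have hc1 : c = 1 := by omega
  rw [hc1, one_mul] at hkey
  have : (p:ℤ)^k = (p:ℤ)^1 := by rw [pow_one]; linarith [hcast]
  have : p ^ k = p ^ 1 := by exact_mod_cast this
  exact Nat.pow_right_injective hp.two_le this

lemma k_eq_one_add {f p k : ℕ} (hf : 1 ≤ f) (hp : p.Prime) (hk : k ≠ 0)
    (h : p ^ k = 2 ^ f + 1) : k = 1 ∨ f = 3 := by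
  have hpodd : Odd p := by
    rcases hp.eq_two_or_odd' with rfl | h' 
    · exfalso
      have h1 : (2:ℕ) ∣ 2 ^ k := dvd_pow_self 2 hk
      have h2 : (2:ℕ) ∣ 2 ^ f := dvd_pow_self 2 (by omega)
      rw [h] at h1
      omega
    · exact h'
  rcases Nat.even_or_odd k with ⟨j, hj⟩ | hkodd
  · -- k even: f = 3
    right
    have hj0 : j ≠ 0 := by rintro rfl; simp at hj; omega
    set m := p ^ j with hm
    have hmsq : m ^ 2 = 2 ^ f + 1 := by
      rw [hm, ← pow_mul]
      rw [← h, hj]; ring_nf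
    have hmodd : Odd m := hpodd.pow
    have hm3 : 3 ≤ m := by
      have : p ≤ m := Nat.le_self_pow hj0 p
      have hp3 : 3 ≤ p := hp.two_le.lt_of_ne (by rintro rfl; exact (Nat.not_odd_iff_even.mpr even_two) hpodd)
      omega
    have hfact : (m - 1) * (m + 1) = 2 ^ f := by
      have : m ^ 2 = m * m := sq m
      nlinarith [hmsq, hm3, Nat.sub_add_cancel (by omega : 1 ≤ m)]
    obtain ⟨a, ha, hae⟩ := (Nat.dvd_prime_pow Nat.prime_two).mp ⟨m + 1, hfact.symm⟩
    obtain ⟨b, hb, hbe⟩ := (Nat.dvd_prime_pow Nat.prime_two).mp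
      (⟨m - 1, by rw [mul_comm] at hfact; exact hfact.symm⟩ : (m+1) ∣ 2 ^ f)
    have h2a : 2 ≤ 2 ^ a := by
      rw [← hae]; omega
    have ha1 : 1 ≤ a := by
      by_contra hc
      interval_cases a <;> omega
    have hab : 2 ^ b = 2 ^ a + 2 := by rw [← hae, ← hbe]; omega
    have ha2 : a < 2 := by
      by_contra hc
      push_neg at hc
      have h4a : (4:ℕ) ∣ 2 ^ a := by
        have : (2:ℕ)^a = 4 * 2 ^ (a - 2) := by
          rw [show (4:ℕ) = 2^2 by norm_num, ← pow_add]; congr 1; omega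
        exact ⟨_, this⟩
      have hb2 : 2 ≤ b := by
        by_contra hbc
        interval_cases b <;> omega
      have h4b : (4:ℕ) ∣ 2 ^ b := by
        have : (2:ℕ)^b = 4 * 2 ^ (b - 2) := by
          rw [show (4:ℕ) = 2^2 by norm_num, ← pow_add]; congr 1; omega
        exact ⟨_, this⟩
      omega
    have ha' : a = 1 := by omega
    have hmval : m = 3 := by rw [ha'] at hae; omega
    have : 2 ^ f = 8 := by
      rw [hmval] at hmsq; omega
    have : (2:ℕ) ^ f = 2 ^ 3 := by omega
    exact Nat.pow_right_injective le_rfl this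
  · -- k odd: k = 1
    left
    by_contra hk1
    have hk2 : 2 ≤ k := by omega
    set c : ℤ := ∑ i ∈ Finset.range k, ((p:ℤ))^i with hc
    have hgeom : c * ((p:ℤ) - 1) = (p:ℤ)^k - 1 := geom_sum_mul _ k
    have hcast : (p:ℤ)^k = 2^f + 1 := by exact_mod_cast congrArg (Nat.cast : ℕ → ℤ) h
    have hkey : c * ((p:ℤ) - 1) = 2^f := by rw [hgeom]; linarith
    have hdvd : c ∣ (2:ℤ)^f := ⟨(p:ℤ)-1, hkey.symm⟩
    have hcodd : Odd c := geom_sum_odd' hpodd hkodd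
    have hna : c.natAbs = 1 := by
      apply odd_dvd_two_pow (f := f) (Int.natAbs_odd.mpr hcodd)
      have := Int.natAbs_dvd_natAbs.mpr hdvd
      have he : ((2:ℤ) ^ f).natAbs = 2 ^ f := by
        rw [Int.natAbs_pow]; rfl
      rw [he] at this
      exact this
    have hcge : (k:ℤ) ≤ c := by
      have : ∀ i ∈ Finset.range k, (1:ℤ) ≤ ((p:ℤ))^i := by
        intro i _
        exact one_le_pow₀ (by exact_mod_cast hp.one_lt.le)
      calc (k:ℤ) = ∑ _i ∈ Finset.range k, (1:ℤ) := by simp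
      _ ≤ c := Finset.sum_le_sum this
    have : c ≤ 1 := by
      rcases Int.natAbs_eq c with he | he <;> rw [hna] at he <;> omega
    omega


/-- Let `q = 2 ^ f` with `f ≥ 1` and `ε = ±1`. If `q + ε` has exactly one prime divisor and
`q - ε` has exactly `2` or `3` distinct prime divisors, then one of three cases holds. -/
theorem stmt_1 (f : ℕ) (hf : 1 ≤ f) (ε : ℤ) (hε : ε = 1 ∨ ε = -1)
    (h1 : (((2 : ℤ) ^ f + ε).natAbs).primeFactors.card = 1)
    (h2 : (((2 : ℤ) ^ f - ε).natAbs).primeFactors.card = 2 ∨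
          (((2 : ℤ) ^ f - ε).natAbs).primeFactors.card = 3) :
    (ε = -1 ∧ f.Prime ∧ (2 ^ f - 1).Prime ∧
      ((2 ^ f + 1).primeFactors.card = 2 ∨ (2 ^ f + 1).primeFactors.card = 3)) ∨
    (ε = 1 ∧ f = 4 ∧ 2 ^ f - 1 = 3 * 5 ∧ 2 ^ f + 1 = 17) ∨
    (ε = 1 ∧ f = 8 ∧ 2 ^ f - 1 = 3 * 5 * 17 ∧ 2 ^ f + 1 = 257) := by
  rcases hε with rfl | rfl
  · -- ε = 1
    rw [natAbs_add] at h1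
    rw [natAbs_sub] at h2
    obtain ⟨p, k, hpp, hkpos, hpk⟩ := isPrimePow_iff_card_primeFactors_eq_one.mpr h1
    have hpp' : p.Prime := Nat.prime_iff.mpr hpp
    rcases k_eq_one_add hf hpp' hkpos.ne' hpk with hk1 | hf3
    · subst hk1
      rw [pow_one] at hpk
      have hprime : (2 ^ f + 1).Prime := hpk ▸ hpp'
      obtain ⟨m, rfl⟩ : ∃ m, f = 2 ^ m :=
        Nat.pow_of_pow_add_prime one_lt_two (by omega) (by rwa [])
      rcases lt_or_ge m 4 with hm | hm
      · interval_cases m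
        · exfalso
          rw [show (2:ℕ)^2^0 - 1 = 1 by norm_num] at h2
          simp [Nat.primeFactors_one] at h2
        · exfalso
          rw [show (2:ℕ)^2^1 - 1 = 3 by norm_num,
            Nat.Prime.primeFactors (by norm_num)] at h2
          simp at h2
        · right; left
          refine ⟨rfl, by norm_num, by norm_num, by norm_num⟩
        · right; right
          refine ⟨rfl, by norm_num, by norm_num, by norm_num⟩
      · exfalso
        have h16 : (2:ℕ)^16 - 1 ∣ 2^(2^m) - 1 := by
          have h := Nat.sub_dvd_pow_sub_pow (2^16) 1 (2^(m-4))
          rw [one_pow, ← pow_mul] at h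
          rw [show 16 * 2^(m-4) = 2^m by
            rw [show (16:ℕ) = 2^4 by norm_num, ← pow_add]; congr 1; omega] at h
          exact h
        have hne : (2:ℕ)^(2^m) - 1 ≠ 0 := by
          have h1le : (1:ℕ) < 2^(2^m) := Nat.one_lt_two_pow (by positivity)
          omega
        have hsub : ({3,5,17,257} : Finset ℕ) ⊆ (2^(2^m) - 1).primeFactors := by
          intro x hx
          simp only [Finset.mem_insert, Finset.mem_singleton] at hx
          have hx65535 : x ∣ (2:ℕ)^16 - 1 := by
            rcases hx with rfl | rfl | rfl | rfl <;> norm_num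
          have hxp : x.Prime := by
            rcases hx with rfl | rfl | rfl | rfl <;> norm_num
          exact Nat.mem_primeFactors.mpr ⟨hxp, hx65535.trans h16, hne⟩
        have hcard : 4 ≤ ((2:ℕ)^(2^m) - 1).primeFactors.card := by
          have := Finset.card_le_card hsub
          rwa [show ({3,5,17,257} : Finset ℕ).card = 4 from by decide] at this
        omega
    · exfalso
      subst hf3
      rw [show (2:ℕ)^3 - 1 = 7 by norm_num,
        Nat.Prime.primeFactors (by norm_num)] at h2
      simp at h2
  · -- ε = -1
    rw [show (2:ℤ)^f + (-1) = (2:ℤ)^f - 1 by ring, natAbs_sub] at h1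
    rw [show (2:ℤ)^f - (-1) = (2:ℤ)^f + 1 by ring, natAbs_add] at h2
    have hf2 : 2 ≤ f := by
      by_contra hc
      interval_cases f
      rw [show (2:ℕ)^1 - 1 = 1 by norm_num] at h1
      simp [Nat.primeFactors_one] at h1
    obtain ⟨p, k, hpp, hkpos, hpk⟩ := isPrimePow_iff_card_primeFactors_eq_one.mpr h1
    have hpp' : p.Prime := Nat.prime_iff.mpr hpp
    have hk1 : k = 1 := k_eq_one_sub hf2 hpp' hkpos.ne' hpk
    subst hk1
    rw [pow_one] at hpk
    have hprime : (2 ^ f - 1).Prime := hpk ▸ hpp'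
    have hfp : f.Prime := (Nat.prime_of_pow_sub_one_prime (by omega) hprime).2
    exact Or.inl ⟨rfl, hfp, hprime, h2⟩
end

section
/- Let f ≥ 1 be an integer and q = 2^f. If ε = 1 and q + 1 has exactly one prime divisor while q − 1 has exactly two distinct prime divisors, then f = 4, i.e., q = 16, q − 1 = 15 = 3·5 and q + 1 = 17. -/
/-- An odd divisor of a power of two is 1. -/
lemma odd_dvd_two_pow_s2 {d f : ℕ} (hd : d ∣ 2 ^ f) (ho : Odd d) : d = 1 := by
  have hco : Nat.Coprime d (2 ^ f) := (ho.coprime_two_right).pow_right f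
  exact Nat.eq_one_of_dvd_coprimes hco dvd_rfl hd

/-- A divisor of a power of two that is ≡ 2 (mod 4) equals 2. -/
lemma eq_two_of_dvd_two_pow {x f : ℕ} (hx : x ∣ 2 ^ f) (h2 : x % 4 = 2) : x = 2 := by
  obtain ⟨i, hi, rfl⟩ := (Nat.dvd_prime_pow Nat.prime_two).mp hx
  match i with
  | 0 => simp at h2
  | 1 => rfl
  | (j + 2) =>
    exfalso
    have : 2 ^ (j + 2) % 4 = 0 := by
      have : (4 : ℕ) ∣ 2 ^ (j + 2) := by
        have : (2 : ℕ) ^ 2 ∣ 2 ^ (j + 2) := pow_dvd_pow 2 (by omega)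
        simpa using this
      omega
    omega

/-- Catalan-style: if `p` is an odd prime and `p ^ k = 2 ^ f + 1` with `f ≥ 4`, then `k = 1`. -/
lemma k_eq_one {p k f : ℕ} (hp : p.Prime) (ho : Odd p) (hf : 4 ≤ f)
    (h : p ^ k = 2 ^ f + 1) : k = 1 := by
  have hp3 : 3 ≤ p := by
    rcases hp.two_le.lt_or_eq with h' | h'
    · omega
    · exact absurd ho (by simp [← h', Nat.even_iff, Nat.odd_iff])
  have h16 : (16 : ℕ) ≤ 2 ^ f := by
    calc (16 : ℕ) = 2 ^ 4 := by norm_num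
    _ ≤ 2 ^ f := Nat.pow_le_pow_right (by norm_num) hf
  rcases Nat.even_or_odd k with hk | hk
  · -- k even: (p^j - 1)(p^j + 1) = 2^f, both powers of 2
    exfalso
    obtain ⟨j, rfl⟩ := hk
    have hj : j ≠ 0 := by rintro rfl; simp only [Nat.add_zero, pow_zero] at h; omega
    obtain ⟨x, hxdef⟩ : ∃ x, x = p ^ j := ⟨_, rfl⟩
    have hxo : Odd x := hxdef ▸ ho.pow
    have hx3 : 3 ≤ x := by
      rw [hxdef]
      calc 3 ≤ p := hp3
      _ = p ^ 1 := (pow_one p).symm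
      _ ≤ p ^ j := Nat.pow_le_pow_right (by omega) (by omega)
    have hxx : x * x = 2 ^ f + 1 := by
      calc x * x = p ^ (j + j) := by rw [hxdef, ← pow_add]
      _ = 2 ^ f + 1 := h
    obtain ⟨y, rfl⟩ : ∃ y, x = y + 2 := ⟨x - 2, by omega⟩
    have hmul : (y + 1) * (y + 3) = 2 ^ f := by nlinarith [hxx]
    have hd1 : (y + 1) ∣ 2 ^ f := ⟨y + 3, hmul.symm⟩
    have hd2 : (y + 3) ∣ 2 ^ f := ⟨y + 1, by rw [← hmul]; ring⟩
    have hy2 : (y + 2) % 2 = 1 := Nat.odd_iff.mp hxo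
    -- y+2 odd, so y+2 % 4 = 1 or 3
    rcases (by omega : (y + 1) % 4 = 2 ∨ (y + 3) % 4 = 2) with hc | hc
    · have hy : y = 1 := by have := eq_two_of_dvd_two_pow hd1 hc; omega
      rw [hy] at hmul
      norm_num at hmul
      omega
    · have := eq_two_of_dvd_two_pow hd2 hc
      omega
  · -- k odd: geometric sum is an odd divisor of 2^f
    set S := ∑ i ∈ Finset.range k, p ^ i with hSdef
    have hgeom : (p - 1) * S = 2 ^ f := by
      have hz : ((S : ℤ)) * ((p : ℤ) - 1) = (p : ℤ) ^ k - 1 := by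
        simpa [hSdef] using geom_sum_mul (p : ℤ) k
      have h1 : ((p : ℤ) - 1) = ((p - 1 : ℕ) : ℤ) := by
        rw [Nat.cast_sub (by omega)]; simp
      have h2 : ((p : ℤ)) ^ k - 1 = ((2 ^ f : ℕ) : ℤ) := by
        have hc := congrArg (Nat.cast : ℕ → ℤ) h
        push_cast at hc ⊢
        linarith
      have hcast : ((S : ℤ)) * ((p - 1 : ℕ) : ℤ) = ((2 ^ f : ℕ) : ℤ) := by rw [← h1, hz, h2]
      have hnat : S * (p - 1) = 2 ^ f := by exact_mod_cast hcast
      rw [mul_comm]; exact hnat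
    have hSodd : Odd S := by
      rw [Nat.odd_iff]
      have : S % 2 = (∑ i ∈ Finset.range k, p ^ i % 2) % 2 := Finset.sum_nat_mod _ _ _
      rw [this, Finset.sum_congr rfl (fun i _ => Nat.odd_iff.mp ho.pow)]
      simpa using Nat.odd_iff.mp hk
    have hS1 : S = 1 := odd_dvd_two_pow_s2 ⟨p - 1, by rw [← hgeom]; ring⟩ hSodd
    have : p - 1 = 2 ^ f := by rw [← hgeom, hS1, mul_one]
    have hpk : p ^ k = p ^ 1 := by rw [pow_one, h]; omega
    exact Nat.pow_right_injective hp.two_le hpk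

/-- If `d ∣ m` then `2^d - 1 ∣ 2^m - 1`. -/
lemma sub_one_dvd_sub_one {d m : ℕ} (h : d ∣ m) : 2 ^ d - 1 ∣ 2 ^ m - 1 := by
  obtain ⟨c, rfl⟩ := h
  simpa [pow_mul] using Nat.sub_dvd_pow_sub_pow (2 ^ d) 1 c

/-- If `4 ∣ m`, `0 < m`, then `2^(2m) - 1` has at least three prime factors. -/
lemma three_primes {m : ℕ} (h4 : 4 ∣ m) (hm : 0 < m) :
    3 ≤ (2 ^ (2 * m) - 1).primeFactors.card := by
  have hm4 : 4 ≤ m := Nat.le_of_dvd hm h4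
  have h16 : (16 : ℕ) ≤ 2 ^ m := by
    calc (16 : ℕ) = 2 ^ 4 := by norm_num
    _ ≤ 2 ^ m := Nat.pow_le_pow_right (by norm_num) hm4
  set q := (2 ^ m + 1).minFac with hqdef
  clear_value q
  have hqp : q.Prime := by rw [hqdef]; exact Nat.minFac_prime (by omega)
  have hqd : q ∣ 2 ^ m + 1 := by rw [hqdef]; exact Nat.minFac_dvd _
  have h3 : (3 : ℕ) ∣ 2 ^ m - 1 := by
    have := sub_one_dvd_sub_one (show 2 ∣ m by omega)
    simpa using this
  have h5 : (5 : ℕ) ∣ 2 ^ m - 1 := by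
    have := sub_one_dvd_sub_one (show 4 ∣ m from h4)
    exact dvd_trans (by norm_num) this
  have hfact : (2 ^ m - 1) * (2 ^ m + 1) = 2 ^ (2 * m) - 1 := by
    have hpow : 2 ^ (2 * m) = 2 ^ m * 2 ^ m := by rw [two_mul, pow_add]
    obtain ⟨y, hy⟩ : ∃ y, 2 ^ m = y + 1 := ⟨2 ^ m - 1, by omega⟩
    rw [hpow, hy]
    have e1 : (y + 1) * (y + 1) = y * y + 2 * y + 1 := by ring
    have e2 : (y + 1 - 1) * (y + 1 + 1) = y * y + 2 * y := by simp; ring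
    omega
  have hd1 : (2 ^ m - 1) ∣ 2 ^ (2 * m) - 1 := ⟨2 ^ m + 1, hfact.symm⟩
  have hd2 : (2 ^ m + 1) ∣ 2 ^ (2 * m) - 1 := ⟨2 ^ m - 1, by rw [← hfact]; ring⟩
  have hq3 : q ≠ 3 := by
    rintro rfl
    have h' : (2 ^ m + 1) - (2 ^ m - 1) = 2 := by omega
    exact absurd (h' ▸ Nat.dvd_sub hqd h3) (by omega)
  have hq5 : q ≠ 5 := by
    rintro rfl
    have h' : (2 ^ m + 1) - (2 ^ m - 1) = 2 := by omega
    exact absurd (h' ▸ Nat.dvd_sub hqd h5) (by omega)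
  have hne : 2 ^ (2 * m) - 1 ≠ 0 := by
    have : (16 : ℕ) ≤ 2 ^ (2 * m) := le_trans h16 (Nat.pow_le_pow_right (by norm_num) (by omega))
    omega
  have hsub : ({3, 5, q} : Finset ℕ) ⊆ (2 ^ (2 * m) - 1).primeFactors := by
    intro x hx
    rw [Nat.mem_primeFactors]
    simp only [Finset.mem_insert, Finset.mem_singleton] at hx
    rcases hx with rfl | rfl | rfl
    · exact ⟨by norm_num, h3.trans hd1, hne⟩
    · exact ⟨by norm_num, h5.trans hd1, hne⟩
    · exact ⟨hqp, hqd.trans hd2, hne⟩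
  calc 3 = ({3, 5, q} : Finset ℕ).card := by
        rw [Finset.card_insert_of_notMem (by simp [Ne.symm hq3]),
          Finset.card_insert_of_notMem (by simp [Ne.symm hq5]), Finset.card_singleton]
  _ ≤ _ := Finset.card_le_card hsub

/-- If `q = 2 ^ f` with `f ≥ 1`, `q + 1` has exactly one prime divisor and `q - 1` has exactly
two distinct prime divisors, then `f = 4`, `q = 16`, `q - 1 = 3 * 5` and `q + 1 = 17`. -/
theorem stmt_2 (f : ℕ) (hf : 1 ≤ f)
    (h1 : (2 ^ f + 1).primeFactors.card = 1)
    (h2 : (2 ^ f - 1).primeFactors.card = 2) :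
    f = 4 ∧ 2 ^ f = 16 ∧ 2 ^ f - 1 = 3 * 5 ∧ 2 ^ f + 1 = 17 := by
  rcases le_or_gt f 4 with hle | hgt
  · interval_cases f
    · rw [show (2:ℕ)^1 - 1 = 1 from rfl, Nat.primeFactors_one] at h2; simp at h2
    · rw [show (2:ℕ)^2 - 1 = 3 from rfl, Nat.Prime.primeFactors (by norm_num)] at h2
      simp at h2
    · rw [show (2:ℕ)^3 - 1 = 7 from rfl, Nat.Prime.primeFactors (by norm_num)] at h2
      simp at h2
    · exact ⟨rfl, by norm_num, by norm_num, by norm_num⟩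
  · exfalso
    -- 2^f + 1 is a prime power p^k
    obtain ⟨p, k, hpp, hk, hpk⟩ := isPrimePow_iff_card_primeFactors_eq_one.mpr h1
    have hp : p.Prime := Nat.prime_iff.mpr hpp
    have hpd : p ∣ 2 ^ f + 1 := hpk ▸ dvd_pow_self p (by omega)
    have hpo : Odd p := by
      refine hp.odd_of_ne_two ?_
      rintro rfl
      have : (2 : ℕ) ∣ 2 ^ f := dvd_pow_self 2 (by omega)
      omega
    have hk1 : k = 1 := k_eq_one hp hpo (by omega) hpk
    rw [hk1, pow_one] at hpk
    have hPprime : (2 ^ f + 1).Prime := hpk ▸ hp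
    -- f must be a power of two
    set d := f / 2 ^ f.factorization 2 with hddef
    clear_value d
    have hdodd : Odd d := Nat.odd_iff.mpr (by
      have := Nat.not_dvd_ordCompl Nat.prime_two (by omega : f ≠ 0)
      omega)
    have hddvd : d ∣ f := by rw [hddef]; exact Nat.ordCompl_dvd f 2
    have hd1 : d = 1 := by
      by_contra hd
      have hd3 : 3 ≤ d := by
        have := Nat.odd_iff.mp hdodd
        omega
      set m := f / d with hmdef
      obtain ⟨m', hm'⟩ := hddvd
      have hmm : m = m' := by rw [hmdef, hm', Nat.mul_div_cancel_left _ (by omega)]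
      have hfm : f = m * d := by rw [hm', hmm]; ring
      have hm1 : 1 ≤ m := by
        rcases Nat.eq_zero_or_pos m with h' | h'
        · rw [h'] at hfm; omega
        · exact h'
      have hdvd : 2 ^ m + 1 ∣ 2 ^ f + 1 := by
        have := Odd.nat_add_dvd_pow_add_pow (2 ^ m) 1 hdodd
        simpa [← pow_mul, ← hfm] using this
      rcases (hPprime.eq_one_or_self_of_dvd _ hdvd) with h' | h'
      · have : (2 : ℕ) ≤ 2 ^ m := by
          calc (2 : ℕ) = 2 ^ 1 := rfl
          _ ≤ 2 ^ m := Nat.pow_le_pow_right (by norm_num) hm1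
        omega
      · have : 2 ^ m = 2 ^ f := by omega
        have hmf : m = f := Nat.pow_right_injective (by norm_num) this
        rw [hmf] at hfm
        have hff : f * 1 = f * d := by rw [mul_one]; exact hfm
        have h1d : 1 = d := Nat.eq_of_mul_eq_mul_left (show 0 < f by omega) hff
        omega
    -- so f = 2^a with a ≥ 3 (since f ≥ 5)
    have hfpow : 2 ^ f.factorization 2 = f := by
      have h := Nat.ordProj_mul_ordCompl_eq_self f 2
      rw [← hddef, hd1, mul_one] at h
      exact h
    set a := f.factorization 2 with hadef
    have ha3 : 3 ≤ a := by
      by_contra h'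
      interval_cases a <;> omega
    have hfeq : f = 2 * 2 ^ (a - 1) := by
      have hs : 2 * 2 ^ (a - 1) = 2 ^ (a - 1 + 1) := (pow_succ' 2 (a - 1)).symm
      rw [hs, show a - 1 + 1 = a by omega]
      exact hfpow.symm
    have h4d : 4 ∣ 2 ^ (a - 1) := by
      have : (2 : ℕ) ^ 2 ∣ 2 ^ (a - 1) := pow_dvd_pow 2 (by omega)
      simpa using this
    have := three_primes h4d (Nat.pow_pos (by norm_num) : 0 < 2 ^ (a - 1))
    rw [← hfeq] at this
    omega
end

section
/- Let f ≥ 1 be an integer and q = 2^f. If both q − 1 and q + 1 have exactly two distinct prime divisors each, then either f is prime, or f = 6, or f = 9. -/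
lemma odd_eq_one_of_dvd_two_pow {n m : ℕ} (hn : ¬ 2 ∣ n) (h : n ∣ 2^m) : n = 1 := by
  have hc : Nat.Coprime n 2 := Nat.coprime_two_right.mpr (Nat.odd_iff.mpr (by omega))
  exact Nat.Coprime.eq_one_of_dvd (hc.pow_right m) h

lemma odd_int_geom_sum {x : ℤ} (hx : Odd x) {a : ℕ} (ha : Odd a) :
    Odd (∑ i ∈ Finset.range a, x ^ i) := by
  have h20 : (2 : ZMod 2) = 0 := by decide
  have hx2 : ((x : ZMod 2)) = 1 := by
    obtain ⟨k, rfl⟩ := hx; push_cast; rw [h20]; ring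
  have h2 : ((∑ i ∈ Finset.range a, x ^ i : ℤ) : ZMod 2) = 1 := by
    push_cast
    rw [hx2]
    simp only [one_pow, Finset.sum_const, Finset.card_range, nsmul_eq_mul, mul_one]
    obtain ⟨t, rfl⟩ := ha; push_cast; rw [h20]; ring
  have hnd : ¬ (2:ℤ) ∣ (∑ i ∈ Finset.range a, x ^ i) := by
    intro hd
    rw [(ZMod.intCast_zmod_eq_zero_iff_dvd _ 2).mpr hd] at h2
    exact absurd h2.symm one_ne_zero
  rw [← Int.not_even_iff_odd]
  exact fun he => hnd he.two_dvd


lemma int_abs_one_of_odd_dvd {Q : ℤ} {m : ℕ} (hQ : Odd Q) (h : Q ∣ (2:ℤ)^m) :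
    Q = 1 ∨ Q = -1 := by
  have h1 : Q.natAbs ∣ 2 ^ m := by
    have := Int.natAbs_dvd_natAbs.mpr h
    simpa [Int.natAbs_pow] using this
  have h2 : ¬ 2 ∣ Q.natAbs := by
    have := Int.natAbs_odd.mpr hQ
    rw [Nat.odd_iff] at this
    omega
  have := odd_eq_one_of_dvd_two_pow h2 h1
  rcases Int.natAbs_eq_iff.mp this with h | h <;> simp [h]

lemma pow_add_one_eq_two_pow {r m a : ℕ} (hr : 2 ≤ r) (hrodd : Odd r) (ha : Odd a)
    (h : r ^ a + 1 = 2 ^ m) : a = 1 := by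
  set Q : ℤ := ∑ i ∈ Finset.range a, (-(r:ℤ)) ^ i with hQdef
  have hgeom : Q * ((-(r:ℤ)) - 1) = (-(r:ℤ)) ^ a - 1 := geom_sum_mul _ a
  rw [Odd.neg_pow ha] at hgeom
  have hkey : Q * ((r:ℤ) + 1) = 2 ^ m := by
    have hc : ((r:ℤ)) ^ a + 1 = 2 ^ m := by exact_mod_cast h
    linarith [hgeom]
  have hQodd : Odd Q := odd_int_geom_sum (by exact Odd.neg (by exact_mod_cast hrodd)) ha
  have hQdvd : Q ∣ (2:ℤ)^m := ⟨(r:ℤ) + 1, hkey.symm⟩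
  rcases int_abs_one_of_odd_dvd hQodd hQdvd with h1 | h1
  · rw [h1, one_mul] at hkey
    have hrm : r + 1 = 2 ^ m := by exact_mod_cast hkey
    have hra : r ^ a = r := by omega
    exact Nat.pow_right_injective hr (by show r ^ a = r ^ 1; rw [pow_one]; exact hra)
  · rw [h1] at hkey
    have : (0:ℤ) < 2 ^ m := by positivity
    have : (0:ℤ) ≤ (r:ℤ) := Int.natCast_nonneg r
    linarith

lemma pow_eq_two_pow_add_one {s m b : ℕ} (hs : 2 ≤ s) (hsodd : Odd s) (hb : Odd b)
    (h : s ^ b = 2 ^ m + 1) : b = 1 := by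
  set Q : ℤ := ∑ i ∈ Finset.range b, ((s:ℤ)) ^ i with hQdef
  have hgeom : Q * ((s:ℤ) - 1) = (s:ℤ) ^ b - 1 := geom_sum_mul _ b
  have hkey : Q * ((s:ℤ) - 1) = 2 ^ m := by
    have hc : ((s:ℤ)) ^ b = 2 ^ m + 1 := by exact_mod_cast h
    linarith
  have hQodd : Odd Q := odd_int_geom_sum (by exact_mod_cast hsodd) hb
  have hQdvd : Q ∣ (2:ℤ)^m := ⟨(s:ℤ) - 1, hkey.symm⟩
  rcases int_abs_one_of_odd_dvd hQodd hQdvd with h1 | h1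
  · rw [h1, one_mul] at hkey
    have hsm : (s:ℤ) = 2 ^ m + 1 := by linarith
    have hsm' : s = 2 ^ m + 1 := by exact_mod_cast hsm
    exact Nat.pow_right_injective hs (by show s ^ b = s ^ 1; rw [pow_one]; omega)
  · rw [h1] at hkey
    have : (0:ℤ) < 2 ^ m := by positivity
    have : (2:ℤ) ≤ (s:ℤ) := by exact_mod_cast hs
    linarith


open Finset in
lemma h_dvd_sub (d k : ℕ) : 2^d - 1 ∣ 2^(d*k) - 1 := by
  simpa [one_pow, pow_mul] using Nat.sub_dvd_pow_sub_pow (2^d) 1 k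

lemma h_dvd_add (d k : ℕ) (hk : Odd k) : 2^d + 1 ∣ 2^(d*k) + 1 := by
  simpa [one_pow, pow_mul] using hk.nat_add_dvd_pow_add_pow (2^d) 1


lemma eq_pow_mul_pow {n p q : ℕ} (hn : n ≠ 0) (hpq : p ≠ q) (h : n.primeFactors ⊆ {p, q}) :
    n = p ^ (n.factorization p) * q ^ (n.factorization q) := by
  conv_lhs => rw [← Nat.factorization_prod_pow_eq_self hn]
  rw [Finsupp.prod]
  rw [Finset.prod_subset (by simpa using h) (fun x _ hx => by
    simp [Finsupp.notMem_support_iff.mp hx])]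
  rw [Finset.prod_pair hpq]


lemma sq_lt_two_pow {t : ℕ} (ht : 5 ≤ t) : (3*t+2)*(3*t+2) < 2^(2*t-1) := by
  induction t, ht using Nat.le_induction with
  | base => norm_num
  | succ n hn ih =>
    have h1 : 2 * (n+1) - 1 = (2*n - 1) + 2 := by omega
    rw [h1, pow_add]
    nlinarith [ih, hn]

lemma arith1 {p f : ℕ} (hp : 5 ≤ p) (hf : 3*p ≤ f) : 2^(p+1) * (f*f) < 2^f := by
  set t := f / 3 with htdef
  have ht5 : 5 ≤ t := Nat.le_div_iff_mul_le (by norm_num) |>.mpr (by omega)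
  have hft : f ≤ 3*t + 2 := by omega
  have hpt : p ≤ t := Nat.le_div_iff_mul_le (by norm_num) |>.mpr (by omega)
  have hsq : f * f < 2^(2*t-1) := by
    calc f * f ≤ (3*t+2)*(3*t+2) := Nat.mul_le_mul hft hft
    _ < 2^(2*t-1) := sq_lt_two_pow ht5
  calc 2^(p+1) * (f*f) < 2^(p+1) * 2^(2*t-1) := by
        exact Nat.mul_lt_mul_of_le_of_lt (le_refl _) hsq (by positivity)
  _ = 2^(p+1+(2*t-1)) := by rw [pow_add, pow_add]; ring
  _ ≤ 2^f := Nat.pow_le_pow_right (by norm_num) (by omega)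

lemma linear_le_pow {j : ℕ} (hj : 3 ≤ j) : 2*j+7 ≤ 3^j := by
  induction j, hj using Nat.le_induction with
  | base => norm_num
  | succ n hn ih =>
    have : 3^(n+1) = 3 * 3^n := by ring
    omega


lemma sq_sub_one_factor (x : ℕ) (hx : 1 ≤ x) : x * x - 1 = (x - 1) * (x + 1) := by
  obtain ⟨y, rfl⟩ : ∃ y, x = y + 1 := ⟨x - 1, by omega⟩
  have h2 : (y+1)*(y+1) = y*(y+1+1)+1 := by ring
  simp only [Nat.add_sub_cancel]
  omega

lemma even_case (m : ℕ) (hm : 2 ≤ m) (hm3 : m ≠ 3)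
    (h1 : (2 ^ (2 * m) - 1).primeFactors.card = 2) : m = 2 := by
  set x := 2 ^ m with hxdef
  have hx4 : 4 ≤ x := by
    calc (4:ℕ) = 2 ^ 2 := by norm_num
    _ ≤ 2 ^ m := Nat.pow_le_pow_right (by norm_num) hm
  have hx2 : 2 ∣ x := dvd_pow_self 2 (by omega)
  have hkey : 2 ^ (2 * m) - 1 = (x - 1) * (x + 1) := by
    rw [two_mul, pow_add, ← hxdef]
    exact sq_sub_one_factor x (by omega)
  -- coprimality
  have hcop : Nat.Coprime (x - 1) (x + 1) := by
    have hg2 : Nat.gcd (x - 1) (x + 1) ∣ 2 := by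
      have := Nat.dvd_sub (Nat.gcd_dvd_right (x-1) (x+1)) (Nat.gcd_dvd_left (x-1) (x+1))
      simpa [show x + 1 - (x - 1) = 2 by omega] using this
    have hgodd : ¬ 2 ∣ Nat.gcd (x - 1) (x + 1) := by
      intro hd
      have := hd.trans (Nat.gcd_dvd_left (x-1) (x+1))
      obtain ⟨u, hu⟩ := this
      obtain ⟨v, hv⟩ := hx2
      omega
    rcases (Nat.dvd_prime Nat.prime_two).mp hg2 with h | h
    · exact h
    · exact (hgodd (by rw [h])).elim
  rw [hkey, Nat.Coprime.primeFactors_mul hcop,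
    Finset.card_union_of_disjoint hcop.disjoint_primeFactors] at h1
  have hc1 : (x - 1).primeFactors.card = 1 ∧ (x + 1).primeFactors.card = 1 := by
    have p1 : 0 < (x - 1).primeFactors.card :=
      Finset.Nonempty.card_pos (Nat.nonempty_primeFactors.mpr (by omega))
    have p2 : 0 < (x + 1).primeFactors.card :=
      Finset.Nonempty.card_pos (Nat.nonempty_primeFactors.mpr (by omega))
    omega
  obtain ⟨r, a, hrp, ha0, hra⟩ :=
    isPrimePow_iff_card_primeFactors_eq_one.mpr hc1.1
  obtain ⟨s, b, hsp, hb0, hsb⟩ :=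
    isPrimePow_iff_card_primeFactors_eq_one.mpr hc1.2
  rw [← Nat.prime_iff] at hrp hsp
  -- oddness of r, s
  have hxo : ¬ 2 ∣ (x - 1) := by obtain ⟨v, hv⟩ := hx2; omega
  have hxo' : ¬ 2 ∣ (x + 1) := by obtain ⟨v, hv⟩ := hx2; omega
  have hrodd : Odd r := by
    rcases hrp.eq_two_or_odd' with h | h
    · exfalso
      apply hxo
      rw [← hra, h]
      exact dvd_pow_self 2 (by omega)
    · exact h
  have hsodd : Odd s := by
    rcases hsp.eq_two_or_odd' with h | h
    · exfalso
      apply hxo'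
      rw [← hsb, h]
      exact dvd_pow_self 2 (by omega)
    · exact h
  have hr2 : 2 ≤ r := hrp.two_le
  have hs2 : 2 ≤ s := hsp.two_le
  -- a = 1
  have ha1 : a = 1 := by
    rcases Nat.even_or_odd a with he | ho
    · exfalso
      obtain ⟨c, hc⟩ := he
      have hco : Odd (r ^ c) := hrodd.pow
      obtain ⟨t, ht⟩ := hco
      have hsq : r ^ a = (r ^ c) * (r ^ c) := by rw [hc, ← two_mul, pow_mul]; ring
      have h4 : (4:ℕ) ∣ 2 ^ m := by
        calc (4:ℕ) = 2^2 := by norm_num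
        _ ∣ 2 ^ m := pow_dvd_pow 2 hm
      obtain ⟨w, hw⟩ := h4
      have hxa : r ^ a = x - 1 := hra
      have he1 : (2*t+1)*(2*t+1) = 4*(t*t+t)+1 := by ring
      have he2 : r ^ a = (2*t+1)*(2*t+1) := by rw [hsq, ht]
      omega
    · apply pow_add_one_eq_two_pow hr2 hrodd ho
      rw [hra, ← hxdef]
      omega
  -- b = 1 (using m ≠ 3)
  have hb1 : b = 1 := by
    rcases Nat.even_or_odd b with he | ho
    · exfalso
      obtain ⟨c, hc⟩ := he
      have hc0 : c ≠ 0 := by omega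
      have hprod : (s ^ c - 1) * (s ^ c + 1) = 2 ^ m := by
        rw [← sq_sub_one_factor (s ^ c) (Nat.one_le_pow _ _ hsp.pos)]
        have : s ^ c * s ^ c = s ^ b := by rw [hc, ← two_mul, pow_mul]; ring
        rw [this, hsb]; omega
      have hd1 : s ^ c - 1 ∣ 2 ^ m := ⟨s ^ c + 1, hprod.symm⟩
      have hd2 : s ^ c + 1 ∣ 2 ^ m := ⟨s ^ c - 1, by rw [mul_comm]; exact hprod.symm⟩
      obtain ⟨u, hu, hue⟩ := (Nat.dvd_prime_pow Nat.prime_two).mp hd1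
      obtain ⟨v, hv, hve⟩ := (Nat.dvd_prime_pow Nat.prime_two).mp hd2
      have hsc3 : 3 ≤ s ^ c := by
        have : s ≤ s ^ c := Nat.le_self_pow hc0 s
        have : 3 ≤ s := by rcases hsodd with ⟨w, hw⟩; omega
        omega
      -- 2^v = 2^u + 2
      have heq : 2 ^ v = 2 ^ u + 2 := by omega
      have hu1 : u = 1 := by
        by_contra hne
        have hu2 : 2 ≤ u := by
          have : u ≠ 0 := by intro h0; rw [h0] at hue; omega
          omega
        have hv2 : 2 ≤ v := by
          by_contra hv2
          interval_cases v <;> omega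
        obtain ⟨w1, hw1⟩ : (4:ℕ) ∣ 2 ^ u := by
          calc (4:ℕ) = 2^2 := by norm_num
          _ ∣ 2 ^ u := pow_dvd_pow 2 hu2
        obtain ⟨w2, hw2⟩ : (4:ℕ) ∣ 2 ^ v := by
          calc (4:ℕ) = 2^2 := by norm_num
          _ ∣ 2 ^ v := pow_dvd_pow 2 hv2
        omega
      have hsc : s ^ c = 3 := by rw [hu1] at hue; omega
      have hs3 : s = 3 := by
        have hdd : s ∣ 3 := hsc ▸ dvd_pow_self s hc0
        have hle := Nat.le_of_dvd (by norm_num) hdd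
        rcases hsodd with ⟨w, hw⟩
        omega
      have hcc : c = 1 :=
        Nat.pow_right_injective hs2 (show s ^ c = s ^ 1 by rw [pow_one]; omega)
      have h9 : x + 1 = 9 := by rw [← hsb, hc, hcc, hs3]; norm_num
      have hx8 : (2:ℕ) ^ m = 8 := by omega
      have h23 : (2:ℕ) ^ m = 2 ^ 3 := by rw [hx8]; norm_num
      exact hm3 (Nat.pow_right_injective (le_refl 2) h23)
    · apply pow_eq_two_pow_add_one hs2 hsodd ho
      rw [hsb, ← hxdef]
  -- now r = 2^m - 1 and s = 2^m + 1 are prime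
  have hreq : r = 2 ^ m - 1 := by rw [← hxdef, ← hra, ha1, pow_one]
  have hseq : s = 2 ^ m + 1 := by rw [← hxdef, ← hsb, hb1, pow_one]
  have hmP : m.Prime := (Nat.prime_of_pow_sub_one_prime (by omega : m ≠ 1) (hreq ▸ hrp)).2
  obtain ⟨e, he⟩ := Nat.pow_of_pow_add_prime (by norm_num : (1:ℕ) < 2)
    (by omega : m ≠ 0) (hseq ▸ hsp)
  rcases Nat.eq_zero_or_pos e with rfl | hepos
  · simp at he; omega
  · have h2m : 2 ∣ m := he ▸ dvd_pow_self 2 (by omega)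
    rcases (Nat.Prime.eq_one_or_self_of_dvd hmP 2 h2m) with h | h <;> omega


lemma odd_case (f : ℕ) (hodd : Odd f) (hf1 : f ≠ 1) (hnp : ¬ f.Prime) (hf9 : f ≠ 9)
    (h2 : (2^f + 1).primeFactors.card = 2) : False := by
  have hf3 : 3 ≤ f := by
    rcases hodd with ⟨t, ht⟩
    rcases Nat.eq_zero_or_pos t with rfl | h <;> omega
  set N := 2^f + 1 with hNdef
  have hN0 : N ≠ 0 := by positivity
  have hNodd : ¬ 2 ∣ N := by
    have : 2 ∣ 2^f := dvd_pow_self 2 (by omega)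
    obtain ⟨w, hw⟩ := this
    omega
  -- 3 is a prime factor
  have h3dvd : 3 ∣ N := by
    have := h_dvd_add 1 f hodd
    simpa using this
  have h3mem : 3 ∈ N.primeFactors := Nat.mem_primeFactors.mpr ⟨by norm_num, h3dvd, hN0⟩
  -- extract the other prime s
  obtain ⟨s, hs3, hPset⟩ : ∃ s, s ≠ 3 ∧ N.primeFactors = {3, s} := by
    obtain ⟨a, b, hab, hP⟩ := Finset.card_eq_two.mp h2
    rw [hP] at h3mem
    rcases Finset.mem_insert.mp h3mem with h | h
    · exact ⟨b, fun hb => hab (hb ▸ h ▸ rfl), by rw [hP, ← h]⟩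
    · rw [Finset.mem_singleton] at h
      exact ⟨a, fun ha => hab (h ▸ ha ▸ rfl), by rw [hP, ← h, Finset.pair_comm]⟩
  have hsmem : s ∈ N.primeFactors := by rw [hPset]; exact Finset.mem_insert.mpr (Or.inr (Finset.mem_singleton_self s))
  have hsp : s.Prime := Nat.prime_of_mem_primeFactors hsmem
  have hsdvdN : s ∣ N := Nat.dvd_of_mem_primeFactors hsmem
  have hs2 : s ≠ 2 := by rintro rfl; exact hNodd hsdvdN
  have hsodd : Odd s := hsp.odd_of_ne_two hs2
  have inst3 : Fact (Nat.Prime 3) := ⟨by norm_num⟩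
  have insts : Fact s.Prime := ⟨hsp⟩
  -- v_3(N) = 1 + v_3(f)
  have v3N : padicValNat 3 N = 1 + padicValNat 3 f := by
    have := padicValNat.pow_add_pow (p := 3) (x := 2) (y := 1) (by decide)
      (by norm_num) (by norm_num) hodd
    simpa [padicValNat.self (by norm_num : 1 < 3)] using this
  by_cases hp5 : ∃ p, p.Prime ∧ p ∣ f ∧ 5 ≤ p
  · -- Case B
    obtain ⟨p, hpp, hpdvd, hp5'⟩ := hp5
    set k := f / p with hkdef
    have hf_eq : f = p * k := (Nat.mul_div_cancel' hpdvd).symm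
    have hkodd : Odd k := (Nat.odd_mul.mp (hf_eq ▸ hodd)).2
    have hk1 : k ≠ 1 := by intro h; rw [h, mul_one] at hf_eq; exact hnp (hf_eq ▸ hpp)
    have hk3 : 3 ≤ k := by rcases hkodd with ⟨t, ht⟩; omega
    have hpodd : Odd p := hpp.odd_of_ne_two (by omega)
    set A := 2^p + 1 with hAdef
    have hA0 : A ≠ 0 := by positivity
    have hAdvd : A ∣ N := by rw [hNdef, hf_eq]; exact h_dvd_add p k hkodd
    have v3A : padicValNat 3 A = 1 := by
      have := padicValNat.pow_add_pow (p := 3) (x := 2) (y := 1) (by decide)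
        (by norm_num) (by norm_num) hpodd
      have hnd : ¬ (3 ∣ p) := by
        intro hd
        rcases (Nat.Prime.eq_one_or_self_of_dvd hpp 3 hd) with h | h <;> omega
      rw [padicValNat.eq_zero_of_not_dvd hnd] at this
      simpa [padicValNat.self (by norm_num : 1 < 3)] using this
    -- A = 3 * s^β
    have hAsub : A.primeFactors ⊆ {3, s} := hPset ▸ Nat.primeFactors_mono hAdvd hN0
    have hAfac : A = 3 ^ (A.factorization 3) * s ^ (A.factorization s) :=
      eq_pow_mul_pow hA0 (fun h => hs3 h.symm) hAsub
    have hAf3 : A.factorization 3 = 1 := by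
      rw [Nat.factorization_def _ (by norm_num)]; exact v3A
    have hA33 : 33 ≤ A := by
      have : 2^5 ≤ 2^p := Nat.pow_le_pow_right (by norm_num) hp5'
      simp only [hAdef]; omega
    have hbeta : A.factorization s ≠ 0 := by
      intro h0
      rw [hAf3, h0] at hAfac
      simp at hAfac
      omega
    have hsdvdA : s ∣ A := by
      rw [hAfac]
      exact dvd_mul_of_dvd_right (dvd_pow_self s hbeta) _
    have hsnd2 : ¬ s ∣ 2^p := by
      intro hd
      exact hs2 ((Nat.prime_dvd_prime_iff_eq hsp (by norm_num)).mp (hsp.dvd_of_dvd_pow hd))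
    -- v_s(N) = v_s(A) + v_s(k)
    have vsN : padicValNat s N = padicValNat s A + padicValNat s k := by
      have := padicValNat.pow_add_pow (p := s) (x := 2^p) (y := 1) hsodd
        (by simpa [hAdef] using hsdvdA) hsnd2 hkodd
      simpa [hNdef, hf_eq, pow_mul, hAdef] using this
    -- N = 3^(1+v3f) * s^(vsA + vsk)
    have hNfac : N = 3 ^ (N.factorization 3) * s ^ (N.factorization s) :=
      eq_pow_mul_pow hN0 (fun h => hs3 h.symm) (hPset ▸ subset_refl _)
    have hNf3 : N.factorization 3 = 1 + padicValNat 3 f := by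
      rw [Nat.factorization_def _ (by norm_num)]; exact v3N
    have hNfs : N.factorization s = A.factorization s + padicValNat s k := by
      rw [Nat.factorization_def _ hsp, Nat.factorization_def _ hsp]; exact vsN
    -- bound
    have hv3f_dvd : 3 ^ (padicValNat 3 f) ∣ f := pow_padicValNat_dvd
    have hvsk_dvd : s ^ (padicValNat s k) ∣ k := pow_padicValNat_dvd
    have hv3f_le : 3 ^ (padicValNat 3 f) ≤ f := Nat.le_of_dvd (by omega) hv3f_dvd
    have hvsk_le : s ^ (padicValNat s k) ≤ k := Nat.le_of_dvd (by omega) hvsk_dvd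
    have hk_le_f : k ≤ f := by
      rw [hf_eq]; exact Nat.le_mul_of_pos_left k (by omega)
    have hNle : N ≤ A * (f * f) := by
      calc N = 3 ^ (N.factorization 3) * s ^ (N.factorization s) := hNfac
      _ = (3 ^ (A.factorization 3) * s ^ (A.factorization s)) *
            (3 ^ (padicValNat 3 f) * s ^ (padicValNat s k)) := by
          rw [hNf3, hNfs, hAf3]
          ring
      _ = A * (3 ^ (padicValNat 3 f) * s ^ (padicValNat s k)) := by rw [← hAfac]
      _ ≤ A * (f * f) := by
          apply Nat.mul_le_mul_left
          exact Nat.mul_le_mul hv3f_le (hvsk_le.trans hk_le_f)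
    have hA_le : A ≤ 2^(p+1) := by
      have : (1:ℕ) ≤ 2^p := Nat.one_le_two_pow
      simp only [hAdef, pow_succ]; omega
    have h3p : 3 * p ≤ f := by
      have := Nat.mul_le_mul_left p hk3
      omega
    have hfinal := arith1 hp5' h3p
    have hlt1 : 2^f < N := by simp only [hNdef]; omega
    have hlt2 : N ≤ 2^(p+1) * (f*f) := hNle.trans (Nat.mul_le_mul_right _ hA_le)
    omega
  · -- Case A : f = 3^j
    push_neg at hp5
    have hq3 : ∀ {q : ℕ}, q.Prime → q ∣ f → q = 3 := by
      intro q hq hqd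
      have h2q : q ≠ 2 := by
        rintro rfl
        rcases hodd with ⟨t, ht⟩
        omega
      have := hp5 q hq hqd
      have := hq.two_le
      interval_cases q
      · omega
      · rfl
      · exact absurd hq (by norm_num)
    obtain hfj := Nat.eq_prime_pow_of_unique_prime_dvd (by omega : f ≠ 0) hq3
    set j := f.primeFactorsList.length with hjdef
    have hj3 : 3 ≤ j := by
      rcases Nat.lt_or_ge j 3 with h | h
      · exfalso
        interval_cases j
        · rw [pow_zero] at hfj; exact hf1 hfj
        · rw [pow_one] at hfj; exact hnp (hfj ▸ Nat.prime_three)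
        · norm_num at hfj; exact hf9 hfj
      · exact h
    have h9f : f = 9 * 3^(j-2) := by
      rw [hfj, show (9:ℕ) = 3^2 by norm_num, ← pow_add]
      congr 1
      omega
    have h513 : (513:ℕ) ∣ N := by
      have hdd := h_dvd_add 9 (3^(j-2)) (Odd.pow (by decide))
      rw [hNdef, h9f]
      simpa using hdd
    have h19mem : 19 ∈ N.primeFactors :=
      Nat.mem_primeFactors.mpr ⟨by norm_num, dvd_trans (by norm_num : (19:ℕ) ∣ 513) h513, hN0⟩
    have hs19 : s = 19 := by
      rw [hPset] at h19mem
      rcases Finset.mem_insert.mp h19mem with h | h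
      · omega
      · exact (Finset.mem_singleton.mp h).symm
    subst hs19
    have inst19 : Fact (Nat.Prime 19) := ⟨by norm_num⟩
    have v19N : padicValNat 19 N = 1 := by
      have hlte := padicValNat.pow_add_pow (p := 19) (x := 2^9) (y := 1) (by decide)
        (by norm_num) (by norm_num) (Odd.pow (by decide : Odd 3) : Odd (3^(j-2)))
      have hnd : ¬ ((19:ℕ) ∣ 3^(j-2)) := by
        intro hd
        have h193 := (by norm_num : Nat.Prime 19).dvd_of_dvd_pow hd
        norm_num at h193
      have hv513 : padicValNat 19 (2^9+1) = 1 := by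
        rw [(by norm_num : (2:ℕ)^9+1 = 19*27), padicValNat.mul (by norm_num) (by norm_num),
          padicValNat.self (by norm_num), padicValNat.eq_zero_of_not_dvd (by norm_num)]
      rw [padicValNat.eq_zero_of_not_dvd hnd, hv513] at hlte
      have hNrw : N = (2^9)^(3^(j-2)) + 1 := by rw [hNdef, h9f, pow_mul]
      rw [hNrw]
      simpa using hlte
    have v3f : padicValNat 3 f = j := by rw [hfj]; exact padicValNat.prime_pow j
    have hNfac : N = 3 ^ (N.factorization 3) * 19 ^ (N.factorization 19) :=
      eq_pow_mul_pow hN0 (by norm_num) (hPset ▸ subset_refl _)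
    have hN_eq : N = 3^(1+j) * 19 := by
      rw [hNfac, Nat.factorization_def _ (by norm_num), Nat.factorization_def _ (by norm_num),
        v3N, v3f, v19N, pow_one]
    have h34 : (3:ℕ)^(1+j) < 2^(2*(1+j)) := by
      calc (3:ℕ)^(1+j) < 4^(1+j) := Nat.pow_lt_pow_left (by norm_num) (by omega)
      _ = 2^(2*(1+j)) := by rw [show (4:ℕ) = 2^2 by norm_num, ← pow_mul]
    have hexp : 2*j+7 ≤ f := by rw [hfj]; exact linear_le_pow hj3
    have hlt : N < 2^f := by
      calc N = 3^(1+j) * 19 := hN_eq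
      _ < 2^(2*(1+j)) * 19 := Nat.mul_lt_mul_of_lt_of_le h34 (le_refl _) (by norm_num)
      _ ≤ 2^(2*(1+j)) * 32 := Nat.mul_le_mul_left _ (by norm_num)
      _ = 2^(2*j+7) := by rw [show (32:ℕ) = 2^5 by norm_num, ← pow_add]; congr 1; omega
      _ ≤ 2^f := Nat.pow_le_pow_right (by norm_num) hexp
    have : 2^f < N := by rw [hNdef]; omega
    omega


/-- If `q = 2 ^ f` with `f ≥ 1` and both `q - 1` and `q + 1` have exactly two distinct prime
divisors, then `f` is prime, or `f = 6`, or `f = 9`. -/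
theorem stmt_4 (f : ℕ) (hf : 1 ≤ f)
    (h1 : (2 ^ f - 1).primeFactors.card = 2)
    (h2 : (2 ^ f + 1).primeFactors.card = 2) :
    f.Prime ∨ f = 6 ∨ f = 9 := by
  by_cases hp : f.Prime
  · exact Or.inl hp
  by_cases h6 : f = 6
  · exact Or.inr (Or.inl h6)
  by_cases h9 : f = 9
  · exact Or.inr (Or.inr h9)
  exfalso
  have hf1 : f ≠ 1 := by
    rintro rfl
    norm_num [Nat.primeFactors_one] at h1
  rcases Nat.even_or_odd f with he | ho
  · obtain ⟨m, rfl⟩ := he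
    have hm2 : 2 ≤ m := by
      by_contra hlt
      interval_cases m
      · omega
      · exact hp (by norm_num : Nat.Prime (1+1))
    have hm3 : m ≠ 3 := fun h => h6 (by omega)
    rw [show m + m = 2*m from by ring] at h1
    have hm := even_case m hm2 hm3 h1
    subst hm
    rw [show (2:ℕ)^(2+2)+1 = 17 from by norm_num,
      Nat.Prime.primeFactors (by norm_num)] at h2
    simp at h2
  · exact odd_case _ ho hf1 hp h9 h2
end
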